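/- Define C_λ(X) = ½‖𝒜(X) − b‖₂² + λT(X) and C_{λ,μ}(X,Z) = μ(C_λ(X) − ½‖𝒜(X) − 𝒜(Z)‖₂²) + ½‖X − Z‖_F². If 0 < μ ≤ ‖𝒜‖^{-2} and X* is a global minimizer of C_λ, then X* is a global minimizer of X ↦ C_{λ,μ}(X, X*). -/
import Mathlib


theorem surrogate_minimizer (m n p : ℕ)
    (A : EuclideanSpace ℝ (Fin m × Fin n) →L[ℝ] EuclideanSpace ℝ (Fin p))
    (b : EuclideanSpace ℝ (Fin p)) (lam mu : ℝ) (hlam : 0 < lam)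
    (hmu0 : 0 < mu) (hmu1 : mu ≤ (‖A‖ ^ 2)⁻¹)
    (T : EuclideanSpace ℝ (Fin m × Fin n) → ℝ)
    (C : EuclideanSpace ℝ (Fin m × Fin n) → ℝ)
    (hC : ∀ X, C X = 1 / 2 * ‖A X - b‖ ^ 2 + lam * T X)
    (Cs : EuclideanSpace ℝ (Fin m × Fin n) → EuclideanSpace ℝ (Fin m × Fin n) → ℝ)
    (hCs : ∀ X Z, Cs X Z = mu * (C X - 1 / 2 * ‖A X - A Z‖ ^ 2) + 1 / 2 * ‖X - Z‖ ^ 2)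
    (Xstar : EuclideanSpace ℝ (Fin m × Fin n))
    (hXstar : ∀ X, C Xstar ≤ C X) :
    ∀ X, Cs Xstar Xstar ≤ Cs X Xstar := by
  intro X
  have hA2 : 0 < ‖A‖ ^ 2 := by
    by_contra h
    push_neg at h
    have : ‖A‖ ^ 2 = 0 := le_antisymm h (by positivity)
    rw [this, inv_zero] at hmu1
    linarith
  have hmuA : mu * ‖A‖ ^ 2 ≤ 1 := by
    calc mu * ‖A‖ ^ 2 ≤ (‖A‖ ^ 2)⁻¹ * ‖A‖ ^ 2 := by nlinarith
    _ = 1 := inv_mul_cancel₀ (ne_of_gt hA2)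
  have hAle : ‖A X - A Xstar‖ ≤ ‖A‖ * ‖X - Xstar‖ := by
    calc ‖A X - A Xstar‖ = ‖A (X - Xstar)‖ := by rw [map_sub]
    _ ≤ ‖A‖ * ‖X - Xstar‖ := A.le_opNorm _
  have key : mu * ‖A X - A Xstar‖ ^ 2 ≤ ‖X - Xstar‖ ^ 2 := by
    have h1 : ‖A X - A Xstar‖ ^ 2 ≤ ‖A‖ ^ 2 * ‖X - Xstar‖ ^ 2 := by
      have := mul_self_le_mul_self (norm_nonneg _) hAle
      nlinarith [norm_nonneg (A X - A Xstar)]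
    nlinarith [norm_nonneg (X - Xstar)]
  rw [hCs, hCs]
  have hCle := hXstar X
  simp only [sub_self, norm_zero]
  nlinarith [norm_nonneg (X - Xstar)]
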